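/- Fix c with 1 < c < 832/825. There exists a constant c₁ > 0 (depending on c) such that for all sufficiently large X, for N = 3X^c and any real ϑ with 0 < ϑ < 1, the Lebesgue measure of the set of (y₁, y₂, y₃, y₄) ∈ [X/2, X]⁴ satisfying |y₁^c + y₂^c + y₃^c + y₄^c − N| < 3ϑ/4 is at least c₁ · ϑ · X^{4−c}. -/

import Mathlib

open Real MeasureTheory

set_option maxHeartbeats 1000000

private lemma rpow_sub_le_aux {c : ℝ} (hc : 1 ≤ c) {a b M : ℝ} (ha : 0 < a) (hab : a ≤ b)
    (hbM : b ≤ M) : b ^ c - a ^ c ≤ c * M ^ (c - 1) * (b - a) := by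
  rcases eq_or_lt_of_le hab with rfl | hlt
  · simp
  have hM : 0 < M := ha.trans_le (hlt.le.trans hbM)
  have hcont : ContinuousOn (fun x : ℝ => x ^ c) (Set.Icc a b) := fun x hx =>
    (Real.continuousAt_rpow_const x c (Or.inl (ha.trans_le hx.1).ne')).continuousWithinAt
  have hderiv : ∀ x ∈ Set.Ioo a b, HasDerivAt (fun x : ℝ => x ^ c) (c * x ^ (c - 1)) x := by
    intro x hx
    have := Real.hasDerivAt_rpow_const (x := x) (p := c) (Or.inl (ha.trans hx.1).ne')
    simpa [mul_comm] using this
  obtain ⟨x, hx, hx'⟩ := exists_hasDerivAt_eq_slope _ _ hlt hcont hderiv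
  have hxpos : 0 < x := ha.trans hx.1
  have hxM : x ≤ M := hx.2.le.trans hbM
  have h1 : x ^ (c - 1) ≤ M ^ (c - 1) := Real.rpow_le_rpow hxpos.le hxM (by linarith)
  have hba : 0 < b - a := by linarith
  have heq : b ^ c - a ^ c = c * x ^ (c - 1) * (b - a) := by
    field_simp at hx'
    linarith [hx']
  rw [heq]
  have hc0 : (0:ℝ) < c := by linarith
  gcongr

theorem measure_lower_bound_B (c : ℝ) (hc1 : 1 < c) (hc2 : c < 832 / 825) :
    ∃ c₁ : ℝ, 0 < c₁ ∧ ∃ X₀ : ℝ, ∀ X : ℝ, X₀ ≤ X → ∀ ϑ : ℝ, 0 < ϑ → ϑ < 1 →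
      ENNReal.ofReal (c₁ * ϑ * X ^ (4 - c)) ≤
        volume {y : Fin 4 → ℝ |
          (∀ i, y i ∈ Set.Icc (X / 2) X) ∧
          |(∑ i, y i ^ c) - 3 * X ^ c| < 3 * ϑ / 4} := by
  have hc2' : c < 2 := by nlinarith
  have hc0 : 0 < c := by linarith
  refine ⟨1 / 216000000, by norm_num, 100, ?_⟩
  intro X hX ϑ hϑ0 hϑ1
  have hX0 : (0 : ℝ) < X := by linarith
  have hX1 : (1 : ℝ) ≤ X := by linarith
  set S : Set (Fin 4 → ℝ) := {y : Fin 4 → ℝ |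
      (∀ i, y i ∈ Set.Icc (X / 2) X) ∧
      |(∑ i, y i ^ c) - 3 * X ^ c| < 3 * ϑ / 4} with hSdef
  -- measurability of S
  have hmeas_sum : Measurable fun y : Fin 4 → ℝ => ∑ i, y i ^ c :=
    Finset.measurable_sum _ fun i _ =>
      (Real.continuous_rpow_const hc0.le).measurable.comp (measurable_pi_apply i)
  have hS : MeasurableSet S := by
    have h1 : MeasurableSet {y : Fin 4 → ℝ | ∀ i, y i ∈ Set.Icc (X / 2) X} := by
      have : {y : Fin 4 → ℝ | ∀ i, y i ∈ Set.Icc (X / 2) X}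
          = Set.pi Set.univ fun _ : Fin 4 => Set.Icc (X / 2) X := by
        ext y; simp only [Set.mem_setOf_eq, Set.mem_univ_pi]
      rw [this]
      exact MeasurableSet.univ_pi fun i => measurableSet_Icc
    have h2 : MeasurableSet {y : Fin 4 → ℝ | |(∑ i, y i ^ c) - 3 * X ^ c| < 3 * ϑ / 4} := by
      have : {y : Fin 4 → ℝ | |(∑ i, y i ^ c) - 3 * X ^ c| < 3 * ϑ / 4}
          = (fun y : Fin 4 → ℝ => ∑ i, y i ^ c) ⁻¹'
            (Set.Ioo (3 * X ^ c - 3 * ϑ / 4) (3 * X ^ c + 3 * ϑ / 4)) := by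
        ext y
        rw [Set.mem_setOf_eq, Set.mem_preimage, Set.mem_Ioo, abs_sub_lt_iff]
        constructor <;> rintro ⟨h1, h2⟩ <;> exact ⟨by linarith, by linarith⟩
      rw [this]
      exact hmeas_sum measurableSet_Ioo
    have : S = {y : Fin 4 → ℝ | ∀ i, y i ∈ Set.Icc (X / 2) X}
        ∩ {y : Fin 4 → ℝ | |(∑ i, y i ^ c) - 3 * X ^ c| < 3 * ϑ / 4} := by
      rw [hSdef, Set.setOf_and]
    rw [this]; exact h1.inter h2
  -- the measurable equivalence splitting off coordinate 0
  set e : (Fin 4 → ℝ) ≃ᵐ ℝ × (Fin 3 → ℝ) :=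
    MeasurableEquiv.piFinSuccAbove (fun _ : Fin 4 => ℝ) 0 with he
  have hpres : MeasurePreserving e (volume : Measure (Fin 4 → ℝ))
      ((volume : Measure ℝ).prod (volume : Measure (Fin 3 → ℝ))) := by
    have := measurePreserving_piFinSuccAbove (fun _ : Fin 4 => (volume : Measure ℝ)) 0
    simpa [volume_pi, he] using this
  set T : Set (ℝ × (Fin 3 → ℝ)) := ⇑e.symm ⁻¹' S with hT
  have hTmeas : MeasurableSet T := e.symm.measurable hS
  have hpre : ⇑e ⁻¹' T = S := by
    rw [hT, ← Set.preimage_comp]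
    simp
  have key : volume S = ∫⁻ z, volume ((fun t => (t, z)) ⁻¹' T) := by
    rw [← hpre, hpres.measure_preimage hTmeas.nullMeasurableSet,
      Measure.prod_apply_symm hTmeas]
  -- parameters
  set η : ℝ := ϑ * X ^ (1 - c) / 8 with hηdef
  have hX1c : (0 : ℝ) < X ^ (1 - c) := Real.rpow_pos_of_pos hX0 _
  have hη0 : 0 < η := by positivity
  have hηle : η ≤ X / 100 := by
    have h1 : X ^ (1 - c) ≤ 1 := Real.rpow_le_one_of_one_le_of_nonpos hX1 (by linarith)
    have : η ≤ 1 / 8 := by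
      rw [hηdef]
      nlinarith
    linarith
  have hXc0 : (0 : ℝ) < X ^ c := Real.rpow_pos_of_pos hX0 _
  have hXX : X ^ (c - 1) * X ^ (1 - c) = 1 := by
    rw [← Real.rpow_add hX0]; norm_num
  -- numeric rpow bounds
  have hb_ub : ((5 : ℝ) / 6) ^ c ≤ 5 / 6 := by
    have := Real.rpow_le_rpow_of_exponent_ge (x := (5 : ℝ) / 6) (by norm_num) (by norm_num) hc1.le
    simpa using this
  have hhalf : ((1 : ℝ) / 2) ^ c ≤ 1 / 2 := by
    have := Real.rpow_le_rpow_of_exponent_ge (x := (1 : ℝ) / 2) (by norm_num) (by norm_num) hc1.le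
    simpa using this
  have ha_lb : (6889 : ℝ) / 10000 ≤ ((83 : ℝ) / 100) ^ c := by
    have h := Real.rpow_le_rpow_of_exponent_ge (x := (83 : ℝ) / 100) (by norm_num) (by norm_num)
      hc2'.le
    have h2 : ((83 : ℝ) / 100) ^ (2 : ℝ) = 6889 / 10000 := by
      rw [show (2 : ℝ) = ((2 : ℕ) : ℝ) by norm_num, Real.rpow_natCast]; norm_num
    linarith [h, h2.ge.trans h]
  have h99_lb : (9801 : ℝ) / 10000 ≤ ((99 : ℝ) / 100) ^ c := by
    have h := Real.rpow_le_rpow_of_exponent_ge (x := (99 : ℝ) / 100) (by norm_num) (by norm_num)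
      hc2'.le
    have h2 : ((99 : ℝ) / 100) ^ (2 : ℝ) = 9801 / 10000 := by
      rw [show (2 : ℝ) = ((2 : ℕ) : ℝ) by norm_num, Real.rpow_natCast]; norm_num
    linarith
  -- the box for the free coordinates
  set Box : Set (Fin 3 → ℝ) := Set.pi Set.univ fun _ : Fin 3 => Set.Icc (83 / 100 * X) (5 / 6 * X)
    with hBoxdef
  have hBoxmeas : MeasurableSet Box := MeasurableSet.univ_pi fun _ => measurableSet_Icc
  -- pointwise section bound
  have main : ∀ z ∈ Box, ENNReal.ofReal η ≤ volume ((fun t => (t, z)) ⁻¹' T) := by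
    intro z hz
    rw [hBoxdef, Set.mem_univ_pi] at hz
    set S3 : ℝ := ∑ j : Fin 3, z j ^ c with hS3def
    have hzlb : ∀ j, (83 / 100 * X) ^ c ≤ z j ^ c := fun j =>
      Real.rpow_le_rpow (by positivity) (hz j).1 hc0.le
    have hzub : ∀ j, z j ^ c ≤ (5 / 6 * X) ^ c := fun j =>
      Real.rpow_le_rpow (le_trans (by positivity) (hz j).1) (hz j).2 hc0.le
    have haXc : (83 / 100 * X) ^ c = (83 / 100 : ℝ) ^ c * X ^ c :=
      Real.mul_rpow (by norm_num) hX0.le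
    have hbXc : (5 / 6 * X) ^ c = (5 / 6 : ℝ) ^ c * X ^ c :=
      Real.mul_rpow (by norm_num) hX0.le
    have hS3lb : 3 * ((6889 : ℝ) / 10000) * X ^ c ≤ S3 := by
      have h := Finset.sum_le_sum (fun j (_ : j ∈ Finset.univ) => hzlb j)
      simp only [Finset.sum_const, Finset.card_univ, Fintype.card_fin, nsmul_eq_mul] at h
      rw [haXc] at h
      nlinarith
    have hS3ub : S3 ≤ 3 * (5 / 6 : ℝ) * X ^ c := by
      have h := Finset.sum_le_sum (fun j (_ : j ∈ Finset.univ) => hzub j)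
      simp only [Finset.sum_const, Finset.card_univ, Fintype.card_fin, nsmul_eq_mul] at h
      rw [hbXc] at h
      nlinarith
    set R : ℝ := 3 * X ^ c - S3 with hRdef
    have hR1 : 1 / 2 * X ^ c ≤ R := by rw [hRdef]; nlinarith
    have hR2 : R ≤ 9333 / 10000 * X ^ c := by rw [hRdef]; nlinarith
    have hR0 : 0 < R := by nlinarith
    set t₀ : ℝ := R ^ c⁻¹ with ht₀def
    have ht₀0 : 0 < t₀ := Real.rpow_pos_of_pos hR0 _
    have ht₀c : t₀ ^ c = R := Real.rpow_inv_rpow hR0.le (by positivity)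
    have ht₀lb : X / 2 ≤ t₀ := by
      rw [← Real.rpow_le_rpow_iff (by positivity) ht₀0.le hc0, ht₀c]
      have : (X / 2) ^ c = (1 / 2 : ℝ) ^ c * X ^ c := by
        rw [show X / 2 = 1 / 2 * X from by ring, Real.mul_rpow (by norm_num) hX0.le]
      rw [this]
      nlinarith
    have ht₀ub : t₀ ≤ 99 / 100 * X := by
      rw [← Real.rpow_le_rpow_iff ht₀0.le (by positivity) hc0, ht₀c]
      have : (99 / 100 * X) ^ c = (99 / 100 : ℝ) ^ c * X ^ c :=
        Real.mul_rpow (by norm_num) hX0.le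
      rw [this]
      nlinarith
    -- the section contains Icc t₀ (t₀ + η)
    have hsub : Set.Icc t₀ (t₀ + η) ⊆ (fun t => (t, z)) ⁻¹' T := by
      intro t ht
      obtain ⟨ht1, ht2⟩ := ht
      have htX : t ≤ X := by linarith
      have htc_lb : R ≤ t ^ c := by
        rw [← ht₀c]; exact Real.rpow_le_rpow ht₀0.le ht1 hc0.le
      have htc_ub : t ^ c - R ≤ ϑ / 4 := by
        have h := rpow_sub_le_aux hc1.le ht₀0 ht1 htX
        rw [ht₀c] at h
        have hcalc : c * X ^ (c - 1) * η = c * ϑ / 8 := by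
          calc c * X ^ (c - 1) * (ϑ * X ^ (1 - c) / 8)
              = c * ϑ / 8 * (X ^ (c - 1) * X ^ (1 - c)) := by ring
            _ = c * ϑ / 8 := by rw [hXX, mul_one]
        have hXc1 : 0 < X ^ (c - 1) := Real.rpow_pos_of_pos hX0 _
        nlinarith [mul_le_mul_of_nonneg_left (show t - t₀ ≤ η from by linarith)
            (mul_nonneg hc0.le hXc1.le),
          mul_nonneg (sub_nonneg.mpr hc2'.le) hϑ0.le]
      simp only [hT, Set.mem_preimage]
      have hesymm : e.symm (t, z) = Fin.cons t z := by
        simp only [he, MeasurableEquiv.piFinSuccAbove_symm_apply, Fin.insertNthEquiv,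
          Equiv.coe_fn_mk, Fin.insertNth_zero']
      rw [hesymm]
      constructor
      · intro i
        refine Fin.cases ?_ ?_ i
        · simp only [Fin.cons_zero]
          exact ⟨by linarith, by linarith⟩
        · intro j
          simp only [Fin.cons_succ]
          exact ⟨by linarith [(hz j).1], by linarith [(hz j).2]⟩
      · have hsum : ∑ i : Fin 4, Fin.cons t z i ^ c = t ^ c + S3 := by
          rw [Fin.sum_univ_succ]
          simp [hS3def]
        rw [hsum]
        have : t ^ c + S3 - 3 * X ^ c = t ^ c - R := by rw [hRdef]; ring
        rw [this, abs_lt]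
        constructor <;> nlinarith
    calc ENNReal.ofReal η = volume (Set.Icc t₀ (t₀ + η)) := by
          rw [Real.volume_Icc]; norm_num
      _ ≤ volume ((fun t => (t, z)) ⁻¹' T) := measure_mono hsub
  -- put everything together
  have hBoxvol : volume Box = ENNReal.ofReal (X / 300) ^ 3 := by
    rw [hBoxdef, volume_pi_pi]
    simp [Real.volume_Icc]
    norm_num
    congr 1
    ring
  calc ENNReal.ofReal (1 / 216000000 * ϑ * X ^ (4 - c))
      ≤ ENNReal.ofReal η * volume Box := by
        rw [hBoxvol, ← ENNReal.ofReal_pow (by positivity), ← ENNReal.ofReal_mul hη0.le]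
        apply ENNReal.ofReal_le_ofReal
        have hX4 : X ^ (4 - c) = X ^ (1 - c) * X ^ 3 := by
          rw [show (X : ℝ) ^ 3 = X ^ ((3 : ℕ) : ℝ) by rw [Real.rpow_natCast],
            ← Real.rpow_add hX0]
          congr 1
          ring
        rw [hX4, hηdef]
        ring_nf
        nlinarith [mul_pos (mul_pos hϑ0 hX1c) (pow_pos hX0 3)]
    _ = ∫⁻ z, Box.indicator (fun _ => ENNReal.ofReal η) z := by
        rw [lintegral_indicator hBoxmeas, setLIntegral_const, mul_comm]
    _ ≤ ∫⁻ z, volume ((fun t => (t, z)) ⁻¹' T) := by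
        apply lintegral_mono
        intro z
        by_cases hzB : z ∈ Box
        · rw [Set.indicator_of_mem hzB]
          exact main z hzB
        · rw [Set.indicator_of_notMem hzB]
          exact zero_le
    _ = volume S := key.symm
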